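/- Define η : ℕ* → ℤ by η(w) = (−1)^{i(t)} if the word w followed by one extra letter 0 is the code of a Schröder tree t, and η(w) = 0 otherwise (in particular η(empty word) = 1, since the one-letter word 0 codes the leaf). Define κ : ℕ* → ℤ by κ(empty word) = 1, κ(w) = (−1)^{i(t)−1} if w is nonempty and w followed by one extra letter 0 is the code of a prime Schröder tree t, and κ(w) = 0 otherwise. Then κ ∗ η = η ∗ κ = e; that is, the convolution inverse of η is supported, besides the empty word, exactly on the codes (with final letter 0 removed) of prime Schröder trees, where it takes the multiplicity-free values (−1)^{i(t)−1}. -/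

import Mathlib

/-- Plane trees. -/
inductive PTree : Type where
  | node : List PTree → PTree

mutual
  /-- Number of internal nodes of a plane tree. -/
  def inodesT : PTree → ℕ
    | .node [] => 0
    | .node (t :: ts) => 1 + inodesT t + inodesL ts
  def inodesL : List PTree → ℕ
    | [] => 0
    | t :: ts => inodesT t + inodesL ts
end

/-- A Schröder tree: every internal node has at least two children. -/
inductive Reduced : PTree → Prop where
  | leaf : Reduced (.node [])
  | node : ∀ ts : List PTree, 2 ≤ ts.length → (∀ t ∈ ts, Reduced t) → Reduced (.node ts)

/-- A prime Schröder tree: a Schröder tree of positive weight whose rightmost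
child subtree of the root is a leaf. -/
def IsPrimeTree (t : PTree) : Prop :=
  Reduced t ∧ ∃ ts : List PTree, t = .node ts ∧ ts.getLast? = some (.node [])

mutual
  /-- Polish-notation code of a plane tree: the leaf is coded by `[0]`, a root with
  `m ≥ 2` children is coded by the letter `m − 1` followed by the codes of the children. -/
  def codeT : PTree → List ℕ
    | .node [] => [0]
    | .node (t :: ts) => (ts.length) :: (codeT t ++ codeL ts)
  def codeL : List PTree → List ℕ
    | [] => []
    | t :: ts => codeT t ++ codeL ts
end
section Aux

theorem reduced_inv {l : List PTree} (h : Reduced (.node l)) :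
    l = [] ∨ (2 ≤ l.length ∧ ∀ t ∈ l, Reduced t) := by
  cases h with
  | leaf => exact Or.inl rfl
  | node ts h2 hm => exact Or.inr ⟨h2, hm⟩

theorem reduced_mem {l : List PTree} (h : Reduced (.node l)) : ∀ t ∈ l, Reduced t := by
  rcases reduced_inv h with rfl | ⟨_, hm⟩
  · simp
  · exact hm

mutual
  theorem codeT_ends : ∀ t : PTree, ∃ u, codeT t = u ++ [0]
    | .node [] => ⟨[], rfl⟩
    | .node (t :: ts) => by
        rcases codeL_ends t ts with ⟨u, hu⟩
        exact ⟨ts.length :: u, by simp [codeT, hu]⟩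
  termination_by t => sizeOf t
  theorem codeL_ends : ∀ (t : PTree) (ts : List PTree),
      ∃ u, codeT t ++ codeL ts = u ++ [0]
    | t, [] => by
        rcases codeT_ends t with ⟨u, hu⟩
        exact ⟨u, by simp [codeL, hu]⟩
    | t, s :: ts => by
        rcases codeL_ends s ts with ⟨u, hu⟩
        exact ⟨codeT t ++ u, by simp [codeL, hu]⟩
  termination_by t ts => sizeOf t + sizeOf ts
end

theorem codeT_ne_nil (t : PTree) : codeT t ≠ [] := by
  rcases codeT_ends t with ⟨u, hu⟩
  simp [hu]

theorem codeL_append : ∀ xs ys : List PTree, codeL (xs ++ ys) = codeL xs ++ codeL ys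
  | [], ys => by simp [codeL]
  | x :: xs, ys => by simp [codeL, codeL_append xs ys]

theorem inodesL_append : ∀ xs ys : List PTree, inodesL (xs ++ ys) = inodesL xs + inodesL ys
  | [], ys => by simp [inodesL]
  | x :: xs, ys => by simp [inodesL, inodesL_append xs ys]; omega

mutual
  theorem codeT_prefix : ∀ (a b : PTree) (x y : List ℕ), Reduced a → Reduced b →
      codeT a ++ x = codeT b ++ y → a = b ∧ x = y
    | .node [], .node [], x, y, _, _, h => by
        refine ⟨rfl, ?_⟩; simpa [codeT] using h
    | .node [], .node (b :: bs), x, y, _, hb, h => by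
        exfalso
        rcases reduced_inv hb with h' | ⟨h2, _⟩
        · simp at h'
        · simp only [List.length_cons] at h2
          simp only [codeT, List.cons_append, List.cons.injEq] at h
          omega
    | .node (a :: as), .node [], x, y, ha, _, h => by
        exfalso
        rcases reduced_inv ha with h' | ⟨h2, _⟩
        · simp at h'
        · simp only [List.length_cons] at h2
          simp only [codeT, List.cons_append, List.cons.injEq] at h
          omega
    | .node (a :: as), .node (b :: bs), x, y, ha, hb, h => by
        simp only [codeT, List.cons_append, List.cons.injEq, List.append_assoc] at h
        obtain ⟨hlen, h⟩ := h
        obtain ⟨rfl, h2⟩ := codeT_prefix a b _ _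
          (reduced_mem ha a (by simp)) (reduced_mem hb b (by simp)) h
        obtain ⟨rfl, rfl⟩ := codeL_prefix as bs x y
          (fun t ht => reduced_mem ha t (by simp [ht]))
          (fun t ht => reduced_mem hb t (by simp [ht])) hlen h2
        exact ⟨rfl, rfl⟩
  theorem codeL_prefix : ∀ (as bs : List PTree) (x y : List ℕ),
      (∀ t ∈ as, Reduced t) → (∀ t ∈ bs, Reduced t) → as.length = bs.length →
      codeL as ++ x = codeL bs ++ y → as = bs ∧ x = y
    | [], [], x, y, _, _, _, h => ⟨rfl, by simpa [codeL] using h⟩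
    | [], b :: bs, x, y, _, _, hlen, _ => by simp at hlen
    | a :: as, [], x, y, _, _, hlen, _ => by simp at hlen
    | a :: as, b :: bs, x, y, ha, hb, hlen, h => by
        simp only [codeL, List.append_assoc] at h
        obtain ⟨rfl, h2⟩ := codeT_prefix a b _ _ (ha a (by simp)) (hb b (by simp)) h
        obtain ⟨rfl, rfl⟩ := codeL_prefix as bs x y
          (fun t ht => ha t (by simp [ht])) (fun t ht => hb t (by simp [ht]))
          (by simpa using hlen) h2
        exact ⟨rfl, rfl⟩
end

theorem codeT_inj {a b : PTree} (ha : Reduced a) (hb : Reduced b)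
    (h : codeT a = codeT b) : a = b :=
  (codeT_prefix a b [] [] ha hb (by simpa using h)).1

end Aux
section Aux2

theorem code_swap (qs : List PTree) (s : PTree) :
    ∃ u : List ℕ, codeT (.node (qs ++ [.node []])) = u ++ [0] ∧
      codeT (.node (qs ++ [s])) = u ++ codeT s := by
  cases qs with
  | nil => exact ⟨[0], by simp [codeT, codeL], by simp [codeT, codeL]⟩
  | cons q qs' =>
      refine ⟨(qs'.length + 1) :: (codeT q ++ codeL qs'), ?_, ?_⟩ <;>
        simp [codeT, codeL, codeL_append]

theorem inodes_swap (qs : List PTree) (s : PTree) :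
    inodesT (.node (qs ++ [s])) =
      inodesT (.node (qs ++ [.node []])) + inodesT s := by
  cases qs with
  | nil => simp [inodesT, inodesL]
  | cons q qs' => simp [inodesT, inodesL, inodesL_append]; omega

theorem inodes_pos (qs : List PTree) (s : PTree) :
    1 ≤ inodesT (.node (qs ++ [s])) := by
  cases qs with
  | nil => simp [inodesT, inodesL]
  | cons q qs' => simp [inodesT]; omega

theorem reduced_swap {qs : List PTree} {a b : PTree}
    (h : Reduced (.node (qs ++ [a]))) (hb : Reduced b) :
    Reduced (.node (qs ++ [b])) := by
  rcases reduced_inv h with h' | ⟨h2, hm⟩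
  · simp at h'
  · refine Reduced.node _ (by simpa using h2) ?_
    intro t ht
    rcases List.mem_append.1 ht with ht | ht
    · exact hm t (by simp [ht])
    · simp at ht; subst ht; exact hb

theorem prime_decomp {p : PTree} (hp : IsPrimeTree p) :
    ∃ qs : List PTree, p = .node (qs ++ [.node []]) := by
  obtain ⟨-, cs, rfl, hlast⟩ := hp
  rcases List.eq_nil_or_concat cs with rfl | ⟨qs, a, rfl⟩
  · simp at hlast
  · simp only [List.concat_eq_append] at hlast ⊢
    rw [List.getLast?_concat] at hlast
    obtain rfl : a = .node [] := by injection hlast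
    exact ⟨qs, rfl⟩

/-- Combining a prime tree (code `a ++ [0]`) with a reduced tree (code `b ++ [0]`)
into a reduced tree with code `a ++ b ++ [0]`. -/
theorem combine (a b : List ℕ) (p s : PTree) (hp : IsPrimeTree p) (hs : Reduced s)
    (hcp : codeT p = a ++ [0]) (hcs : codeT s = b ++ [0]) :
    ∃ qs : List PTree, p = .node (qs ++ [.node []]) ∧ Reduced (.node (qs ++ [s])) ∧
      codeT (.node (qs ++ [s])) = (a ++ b) ++ [0] ∧
      inodesT (.node (qs ++ [s])) = inodesT p + inodesT s := by
  obtain ⟨qs, rfl⟩ := prime_decomp hp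
  obtain ⟨u, hu1, hu2⟩ := code_swap qs s
  have hua : u = a := by
    rw [hcp] at hu1
    simpa using hu1.symm
  refine ⟨qs, rfl, reduced_swap hp.1 hs, ?_, inodes_swap qs s⟩
  rw [hu2, hua, hcs, List.append_assoc]

end Aux2

theorem codeT_node_length (x : PTree) (xs : List PTree) :
    2 ≤ (codeT (.node (x :: xs))).length := by
  rcases codeT_ends x with ⟨u, hu⟩
  simp [codeT, hu]
  omega


/-- let `η(w) = (−1)^{i(t)}` if `w ++ [0]` is the code of a Schröder
tree `t` and `0` otherwise, and let `κ([]) = 1`, `κ(w) = (−1)^{i(t)−1}` if `w` is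
nonempty and `w ++ [0]` is the code of a prime Schröder tree `t`, `κ(w) = 0`
otherwise. Then `κ ∗ η = η ∗ κ = e` for the convolution product on functions
`ℕ* → ℤ`. -/
theorem stmt1 (η κ : List ℕ → ℤ)
    (hη : ∀ (w : List ℕ) (t : PTree), Reduced t → codeT t = w ++ [0] →
      η w = (-1) ^ (inodesT t))
    (hη0 : ∀ w : List ℕ, (¬ ∃ t : PTree, Reduced t ∧ codeT t = w ++ [0]) → η w = 0)
    (hκe : κ [] = 1)
    (hκ : ∀ (w : List ℕ) (t : PTree), w ≠ [] → IsPrimeTree t → codeT t = w ++ [0] →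
      κ w = (-1) ^ (inodesT t - 1))
    (hκ0 : ∀ w : List ℕ, w ≠ [] →
      (¬ ∃ t : PTree, IsPrimeTree t ∧ codeT t = w ++ [0]) → κ w = 0) :
    ∀ w : List ℕ,
      (∑ i ∈ Finset.range (w.length + 1), κ (w.take i) * η (w.drop i)) =
        (if w = [] then 1 else 0) ∧
      (∑ i ∈ Finset.range (w.length + 1), η (w.take i) * κ (w.drop i)) =
        (if w = [] then 1 else 0) := by
  have ηε : η [] = 1 := by
    have := hη [] (.node []) Reduced.leaf (by simp [codeT])
    simpa [inodesT] using this
  have conj1 : ∀ w : List ℕ,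
      (∑ i ∈ Finset.range (w.length + 1), κ (w.take i) * η (w.drop i)) =
        (if w = [] then 1 else 0) := by
    intro w
    by_cases hw : w = []
    · subst hw; simp [hκe, ηε]
    · rw [if_neg hw]
      by_cases hex : ∃ t : PTree, Reduced t ∧ codeT t = w ++ [0]
      · obtain ⟨t, ht, hcode⟩ := hex
        obtain ⟨ts, rfl⟩ : ∃ ts, t = .node ts := by
          cases t with | node ts => exact ⟨ts, rfl⟩
        have hts2 : 2 ≤ ts.length := by
          rcases reduced_inv ht with rfl | ⟨h2, -⟩
          · exfalso
            apply hw
            have := congrArg List.length hcode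
            simp [codeT] at this
            exact this
          · exact h2
        obtain ⟨qs, s, rfl⟩ : ∃ qs s, ts = qs ++ [s] := by
          rcases List.eq_nil_or_concat ts with rfl | ⟨qs, s, h⟩
          · simp at hts2
          · exact ⟨qs, s, by simpa using h⟩
        have hs : Reduced s := reduced_mem ht s (by simp)
        have hpred : Reduced (PTree.node (qs ++ [PTree.node []])) :=
          reduced_swap ht Reduced.leaf
        have hprime : IsPrimeTree (PTree.node (qs ++ [PTree.node []])) :=
          ⟨hpred, _, rfl, List.getLast?_concat⟩
        obtain ⟨u, hpu, htu⟩ := code_swap qs s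
        obtain ⟨v, hv⟩ := codeT_ends s
        have hwuv : w = u ++ v := by
          have h5 : w ++ [0] = (u ++ v) ++ [0] := by
            rw [← hcode, htu, hv, List.append_assoc]
          exact (List.append_inj' h5 rfl).1
        have hu0 : u ≠ [] := by
          intro h0
          rw [h0, List.nil_append] at hpu
          obtain ⟨x, xs, hxx⟩ : ∃ x xs, qs ++ [PTree.node []] = x :: xs := by
            cases qs <;> exact ⟨_, _, rfl⟩
          have h2 := codeT_node_length x xs
          rw [← hxx, hpu] at h2
          simp at h2
        have hip : 1 ≤ inodesT (PTree.node (qs ++ [PTree.node []])) :=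
          inodes_pos qs _
        have hκu : κ u = (-1) ^ (inodesT (PTree.node (qs ++ [PTree.node []])) - 1) :=
          hκ u _ hu0 hprime hpu
        have hηv : η v = (-1) ^ (inodesT s) := hη v s hs hv
        have hηw : η w = (-1) ^ (inodesT (PTree.node (qs ++ [s]))) := hη w _ ht hcode
        have hin : inodesT (PTree.node (qs ++ [s])) =
            inodesT (PTree.node (qs ++ [PTree.node []])) + inodesT s := inodes_swap qs s
        have hsub : ({0, u.length} : Finset ℕ) ⊆ Finset.range (w.length + 1) := by
          intro x hx
          simp only [Finset.mem_insert, Finset.mem_singleton] at hx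
          rcases hx with rfl | rfl
          · simp
          · simp [hwuv]
        have hne : (0 : ℕ) ≠ u.length := by
          intro h
          exact hu0 (List.eq_nil_of_length_eq_zero h.symm)
        have hz : ∀ i ∈ Finset.range (w.length + 1), i ∉ ({0, u.length} : Finset ℕ) →
            κ (w.take i) * η (w.drop i) = 0 := by
          intro i hi hni
          simp only [Finset.mem_insert, Finset.mem_singleton, not_or] at hni
          obtain ⟨hi0, hiu⟩ := hni
          by_cases hκi : κ (w.take i) = 0
          · rw [hκi, zero_mul]
          by_cases hηi : η (w.drop i) = 0
          · rw [hηi, mul_zero]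
          exfalso
          have hti : w.take i ≠ [] := by
            intro h
            have := congrArg List.length h
            simp [List.length_take] at this
            rcases this with h' | h'
            · exact hi0 h'
            · exact hw h'
          obtain ⟨p', hp', hcp'⟩ : ∃ p', IsPrimeTree p' ∧ codeT p' = w.take i ++ [0] := by
            by_contra hc; exact hκi (hκ0 _ hti hc)
          obtain ⟨s', hs', hcs'⟩ : ∃ s', Reduced s' ∧ codeT s' = w.drop i ++ [0] := by
            by_contra hc; exact hηi (hη0 _ hc)
          obtain ⟨qs', hpq', hred', hcode', -⟩ := combine _ _ _ _ hp' hs' hcp' hcs'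
          rw [List.take_append_drop] at hcode'
          have heq := codeT_inj hred' ht (hcode'.trans hcode.symm)
          have hlists : qs' ++ [s'] = qs ++ [s] := by injection heq
          have hss : s' = s := by
            have h6 := List.append_inj' hlists (by simp)
            simpa using h6.2
          have hdv : w.drop i = v := by
            have h7 : w.drop i ++ [0] = v ++ [0] := by rw [← hcs', hss, hv]
            simpa using h7
          apply hiu
          have h1 : w.length - i = v.length := by
            rw [← hdv]; simp [List.length_drop]
          have h2 : w.length = u.length + v.length := by simp [hwuv]
          have h3 : i ≤ w.length := Nat.lt_succ_iff.mp (Finset.mem_range.1 hi)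
          omega
        rw [← Finset.sum_subset hsub hz, Finset.sum_pair hne]
        rw [List.take_zero, List.drop_zero, hκe, one_mul, hηw]
        rw [hwuv, List.take_left, List.drop_left, hκu, hηv, hin]
        obtain ⟨k, hk⟩ : ∃ k, inodesT (PTree.node (qs ++ [PTree.node []])) = k + 1 :=
          ⟨_, (Nat.succ_pred_eq_of_pos hip).symm⟩
        rw [hk, Nat.add_sub_cancel, pow_add, pow_succ]
        ring
      · apply Finset.sum_eq_zero
        intro i hi
        by_cases hi0 : i = 0
        · subst hi0
          simp only [List.take_zero, List.drop_zero]
          rw [hη0 w hex, mul_zero]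
        · by_cases hκi : κ (w.take i) = 0
          · rw [hκi, zero_mul]
          by_cases hηi : η (w.drop i) = 0
          · rw [hηi, mul_zero]
          exfalso
          have hti : w.take i ≠ [] := by
            intro h
            have := congrArg List.length h
            simp [List.length_take] at this
            rcases this with h' | h'
            · exact hi0 h'
            · exact hw h'
          obtain ⟨p', hp', hcp'⟩ : ∃ p', IsPrimeTree p' ∧ codeT p' = w.take i ++ [0] := by
            by_contra hc; exact hκi (hκ0 _ hti hc)
          obtain ⟨s', hs', hcs'⟩ : ∃ s', Reduced s' ∧ codeT s' = w.drop i ++ [0] := by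
            by_contra hc; exact hηi (hη0 _ hc)
          obtain ⟨qs', hpq', hred', hcode', -⟩ := combine _ _ _ _ hp' hs' hcp' hcs'
          rw [List.take_append_drop] at hcode'
          exact hex ⟨_, hred', hcode'⟩
  have conj2 : ∀ n, ∀ w : List ℕ, w.length = n →
      (∑ i ∈ Finset.range (w.length + 1), η (w.take i) * κ (w.drop i)) =
        (if w = [] then 1 else 0) := by
    intro n
    induction n using Nat.strong_induction_on with
    | _ n ih =>
      intro w hlen
      by_cases hw : w = []
      · subst hw; simp [hκe, ηε]
      · rw [if_neg hw]
        have hwlen : 1 ≤ w.length := by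
          cases w with
          | nil => exact absurd rfl hw
          | cons a l => simp
        -- Step 1: express η (w.take i) via conj1
        have hηt : ∀ i, i ≤ w.length →
            η (w.take i) = (if i = 0 then 1 else 0) -
              ∑ j ∈ Finset.Ico 1 (i + 1), κ (w.take j) * η ((w.take i).drop j) := by
          intro i him
          have h1 := conj1 (w.take i)
          rw [List.length_take, min_eq_left him] at h1
          rw [Finset.range_eq_Ico, Finset.sum_eq_sum_Ico_succ_bot (Nat.succ_pos i)] at h1
          rw [List.take_zero, List.drop_zero, hκe, one_mul] at h1
          have htt : ∀ j ∈ Finset.Ico 1 (i + 1),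
              κ ((w.take i).take j) * η ((w.take i).drop j) =
              κ (w.take j) * η ((w.take i).drop j) := by
            intro j hj
            rw [List.take_take, min_eq_left (by
              simp only [Finset.mem_Ico] at hj; omega)]
          rw [Finset.sum_congr rfl htt] at h1
          have hite : (if w.take i = [] then (1:ℤ) else 0) = if i = 0 then 1 else 0 := by
            by_cases h : i = 0
            · subst h; simp
            · rw [if_neg h, if_neg]
              intro hnil
              have := congrArg List.length hnil
              rw [List.length_take, min_eq_left him] at this
              exact h this
          rw [hite] at h1
          linarith [h1]
        calc (∑ i ∈ Finset.range (w.length + 1), η (w.take i) * κ (w.drop i))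
            = ∑ i ∈ Finset.range (w.length + 1),
                ((if i = 0 then (1:ℤ) else 0) * κ (w.drop i) -
                 ∑ j ∈ Finset.Ico 1 (i + 1),
                   κ (w.take j) * (η ((w.take i).drop j) * κ (w.drop i))) := by
              apply Finset.sum_congr rfl
              intro i hi
              have him : i ≤ w.length := Nat.lt_succ_iff.mp (Finset.mem_range.1 hi)
              rw [hηt i him, sub_mul, Finset.sum_mul]
              congr 1
              apply Finset.sum_congr rfl
              intro j hj
              ring
          _ = κ w - ∑ i ∈ Finset.range (w.length + 1),
                ∑ j ∈ Finset.Ico 1 (i + 1),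
                   κ (w.take j) * (η ((w.take i).drop j) * κ (w.drop i)) := by
              rw [Finset.sum_sub_distrib]
              congr 1
              have : ∀ i ∈ Finset.range (w.length + 1),
                  (if i = 0 then (1:ℤ) else 0) * κ (w.drop i) =
                  if i = 0 then κ (w.drop i) else 0 := by
                intro i _; by_cases h : i = 0 <;> simp [h]
              rw [Finset.sum_congr rfl this, Finset.sum_ite_eq' _ 0]
              simp
          _ = κ w - κ w := by
              congr 1
              rw [Finset.range_eq_Ico, Finset.sum_eq_sum_Ico_succ_bot (Nat.succ_pos _)]
              rw [show Finset.Ico 1 (0 + 1) = ∅ from rfl]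
              rw [Finset.sum_empty, zero_add]
              rw [← Finset.sum_Ico_Ico_comm]
              have hinner : ∀ j ∈ Finset.Ico 1 (w.length + 1),
                  (∑ i ∈ Finset.Ico j (w.length + 1),
                    κ (w.take j) * (η ((w.take i).drop j) * κ (w.drop i))) =
                  κ (w.take j) * (if j = w.length then 1 else 0) := by
                intro j hj
                simp only [Finset.mem_Ico] at hj
                rw [← Finset.mul_sum]
                congr 1
                rw [Finset.sum_Ico_eq_sum_range]
                have hstep : ∀ k,
                    η ((w.take (j + k)).drop j) * κ (w.drop (j + k)) =
                    η ((w.drop j).take k) * κ ((w.drop j).drop k) := by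
                  intro k
                  have e1 : (w.take (j + k)).drop j = (w.drop j).take k := by
                    rw [List.drop_take]; congr 1; omega
                  have e2 : w.drop (j + k) = (w.drop j).drop k := by
                    rw [List.drop_drop]
                  rw [e1, e2]
                rw [Finset.sum_congr rfl (fun k _ => hstep k)]
                rw [show w.length + 1 - j = (w.drop j).length + 1 by
                  simp [List.length_drop]; omega]
                rw [ih (w.length - j) (by omega) (w.drop j) (by simp [List.length_drop])]
                by_cases h : j = w.length
                · rw [if_pos h, if_pos (by rw [List.drop_eq_nil_iff]; omega)]
                · rw [if_neg h, if_neg (by rw [List.drop_eq_nil_iff]; omega)]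
              rw [Finset.sum_congr rfl hinner]
              have : ∀ j ∈ Finset.Ico 1 (w.length + 1),
                  κ (w.take j) * (if j = w.length then 1 else 0) =
                  if j = w.length then κ (w.take j) else 0 := by
                intro j _; by_cases h : j = w.length <;> simp [h]
              rw [Finset.sum_congr rfl this, Finset.sum_ite_eq' _ w.length]
              rw [if_pos (by simp [Finset.mem_Ico]; omega)]
              rw [List.take_length]
          _ = 0 := sub_self _
  refine fun w => ⟨conj1 w, conj2 w.length w rfl⟩
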